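/- For any Boolean function f : {0,1}^n → {0,1}, the total influence satisfies Inf(f) ≤ Cert(f). -/

import Mathlib

open Finset

variable {ι : Type*} [Fintype ι] [DecidableEq ι]

/-- `x` with its `i`-th bit flipped. -/
def flipAt (x : ι → Bool) (i : ι) : ι → Bool := Function.update x i (!x i)

/-- `S` is a certificate for `f`'s value at `x`. -/
def IsCert (f : (ι → Bool) → Bool) (x : ι → Bool) (S : Finset ι) : Prop :=
  ∀ y : ι → Bool, (∀ i ∈ S, y i = x i) → f y = f x

/-- Certificate complexity of `f` at `x`: minimum size of a certificate. -/
noncomputable def certAt (f : (ι → Bool) → Bool) (x : ι → Bool) : ℕ :=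
  sInf {k | ∃ S : Finset ι, IsCert f x S ∧ S.card = k}

/-- Certificate complexity of `f`. -/
noncomputable def certC (f : (ι → Bool) → Bool) : ℕ :=
  sSup {k | ∃ x : ι → Bool, certAt f x = k}

/-- Influence of coordinate `i` on `f` (uniform distribution). -/
noncomputable def influence (f : (ι → Bool) → Bool) (i : ι) : ℝ :=
  ((univ.filter fun x : ι → Bool => f (flipAt x i) ≠ f x).card : ℝ) / 2 ^ Fintype.card ι

/-- Total influence of `f`. -/
noncomputable def totalInf (f : (ι → Bool) → Bool) : ℝ := ∑ i : ι, influence f i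

/-- `Pr_{x uniform}[f(x) = b]`. -/
noncomputable def probEq (f : (ι → Bool) → Bool) (b : Bool) : ℝ :=
  ((univ.filter fun x : ι → Bool => f x = b).card : ℝ) / 2 ^ Fintype.card ι

/-- Variance of `f`: `Pr[f = 0] * Pr[f = 1]`. -/
noncomputable def fvar (f : (ι → Bool) → Bool) : ℝ := probEq f false * probEq f true



lemma isCert_univ (f : (ι → Bool) → Bool) (x : ι → Bool) : IsCert f x univ := by
  intro y hy
  have : y = x := funext fun i => hy i (mem_univ i)
  rw [this]

lemma exists_min_cert (f : (ι → Bool) → Bool) (x : ι → Bool) :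
    ∃ S : Finset ι, IsCert f x S ∧ S.card = certAt f x :=
  Nat.sInf_mem (⟨(univ : Finset ι).card, univ, isCert_univ f x, rfl⟩ :
    {k | ∃ S : Finset ι, IsCert f x S ∧ S.card = k}.Nonempty)

lemma mem_cert_of_sensitive (f : (ι → Bool) → Bool) (x : ι → Bool) {S : Finset ι}
    (hS : IsCert f x S) {i : ι} (hi : f (flipAt x i) ≠ f x) : i ∈ S := by
  by_contra h
  apply hi
  apply hS
  intro j hj
  have : j ≠ i := fun e => h (e ▸ hj)
  simp [flipAt, Function.update_of_ne this]

lemma sens_le_certAt (f : (ι → Bool) → Bool) (x : ι → Bool) :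
    (univ.filter fun i : ι => f (flipAt x i) ≠ f x).card ≤ certAt f x := by
  obtain ⟨S, hS, hcard⟩ := exists_min_cert f x
  rw [← hcard]
  apply Finset.card_le_card
  intro i hi
  exact mem_cert_of_sensitive f x hS (by simpa using hi)

lemma certAt_le_card (f : (ι → Bool) → Bool) (x : ι → Bool) :
    certAt f x ≤ Fintype.card ι := by
  have hmem : (univ : Finset ι).card ∈ {k | ∃ S : Finset ι, IsCert f x S ∧ S.card = k} :=
    ⟨univ, isCert_univ f x, rfl⟩
  simpa [certAt] using Nat.sInf_le hmem

lemma certAt_le_certC (f : (ι → Bool) → Bool) (x : ι → Bool) :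
    certAt f x ≤ certC f := by
  apply le_csSup
  · exact ⟨Fintype.card ι, fun k ⟨y, hy⟩ => hy ▸ certAt_le_card f y⟩
  · exact ⟨x, rfl⟩

theorem stmt5 {ι : Type*} [Fintype ι] [DecidableEq ι] (f : (ι → Bool) → Bool) :
    totalInf f ≤ certC f := by
  have hswap : (∑ i : ι, ((univ.filter fun x : ι → Bool => f (flipAt x i) ≠ f x).card))
      = ∑ x : ι → Bool, ((univ.filter fun i : ι => f (flipAt x i) ≠ f x).card) := by
    simp only [Finset.card_filter]
    exact Finset.sum_comm
  have hbound : ∀ x : ι → Bool,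
      ((univ.filter fun i : ι => f (flipAt x i) ≠ f x).card) ≤ certC f := fun x =>
    (sens_le_certAt f x).trans (certAt_le_certC f x)
  have hpos : (0:ℝ) < 2 ^ Fintype.card ι := by positivity
  unfold totalInf influence
  rw [← Finset.sum_div, div_le_iff₀ hpos]
  push_cast
  calc (∑ i : ι, ((univ.filter fun x : ι → Bool => f (flipAt x i) ≠ f x).card : ℝ))
      = ∑ x : ι → Bool, ((univ.filter fun i : ι => f (flipAt x i) ≠ f x).card : ℝ) := by
        exact_mod_cast congrArg (Nat.cast : ℕ → ℝ) hswap
    _ ≤ ∑ _x : ι → Bool, (certC f : ℝ) := by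
        apply Finset.sum_le_sum
        intro x _
        exact_mod_cast hbound x
    _ = (certC f : ℝ) * 2 ^ Fintype.card ι := by
        simp [Finset.sum_const, Fintype.card_fun, mul_comm]
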